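/- Fix a positive integer n, a signed measure μ on [0,r] with ‖μ‖₁ ≤ 1 (r < e^{-2}), and the n-essential partition 𝕀ⁿ_μ of [0,r] defined by the stopping rule: a binary interval I of level l is divided while ‖μ‖₁(I) ≥ l/n. Then: (i) the number of intervals in the partition satisfies |𝕀ⁿ_μ| ≤ 2(n+1); and (ii) the terminal (divided-but-children-not-divided) intervals Q of the construction satisfy Σ_{l≥0} l·q_l ≤ n where q_l = #{I ∈ Q : |I| = 2^{-l} r}, so the number of possible n-essential partitions over all μ with ‖μ‖₁ ≤ 1 does not exceed (4e)ⁿ. -/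

import Mathlib

open scoped ENNReal
open MeasureTheory

/-- The critical Volterra kernel `K_t(s) = (t-s)₊^{-1/2} |ln (t-s)₊|^{-1}`,
interpreted as `0` for `s ≥ t`. -/
noncomputable def Ker (t s : ℝ) : ℝ :=
  if s < t then (t - s) ^ (-(1 : ℝ) / 2) * |Real.log (t - s)|⁻¹ else 0

/-- The adjoint operator `V* : M[0,r] → L₂[0,r]`, `(V*μ)(s) = ∫₀ʳ K_t(s) μ(dt)`,
where the integral against the signed measure `μ` is computed through its Jordan
decomposition. -/
noncomputable def VstarInt (μ : MeasureTheory.SignedMeasure ℝ) (s : ℝ) : ℝ :=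
  (∫ t, Ker t s ∂μ.toJordanDecomposition.posPart) -
    ∫ t, Ker t s ∂μ.toJordanDecomposition.negPart

/-- The binary interval of level `l` and index `i` in `[0,r]`:
`(i·r·2^{-l}, (i+1)·r·2^{-l}]`. -/
def binInt (r : ℝ) (l i : ℕ) : Set ℝ :=
  Set.Ioc ((i : ℝ) * r / 2 ^ l) (((i : ℝ) + 1) * r / 2 ^ l)

/-- The left endpoint `t_I` of the binary interval of level `l`, index `i`. -/
noncomputable def leftPt (r : ℝ) (l i : ℕ) : ℝ := (i : ℝ) * r / 2 ^ l

/-- The dividing condition for a binary interval of level `l`: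
`‖μ‖₁(I) ≥ l/n`, with `‖μ‖₁(I)` the total variation of `μ` on `I`. -/
def DivCond (μ : MeasureTheory.SignedMeasure ℝ) (r : ℝ) (n l i : ℕ) : Prop :=
  (l : ℝ) / (n : ℝ) ≤ (μ.totalVariation (binInt r l i)).toReal

/-- `Divided μ r n l i` : in the construction of the `n`-essential partition the
binary interval of level `l`, index `i` was divided, i.e. it was reached (its
parent was divided; the root `(0,0)` is always reached) and it satisfies the
dividing condition `‖μ‖₁(I) ≥ l/n`. -/
def Divided (μ : MeasureTheory.SignedMeasure ℝ) (r : ℝ) (n : ℕ) : ℕ → ℕ → Prop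
  | 0, i => i = 0
  | l + 1, i => Divided μ r n l (i / 2) ∧ DivCond μ r n (l + 1) i

/-- Membership of the binary interval of level `l`, index `i` in the `n`-essential
partition `𝕀ⁿ_μ`: its parent was divided but the interval itself fails the
dividing condition (so it was placed into the partition). -/
def InPartition (μ : MeasureTheory.SignedMeasure ℝ) (r : ℝ) (n : ℕ) : ℕ → ℕ → Prop
  | 0, _ => False
  | l + 1, i => Divided μ r n l (i / 2) ∧ ¬ DivCond μ r n (l + 1) i

/-- A terminal divided interval: it was divided, but neither of its two halves was
divided. These form the set `Q` determining the construction. -/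
def TerminalDiv (μ : MeasureTheory.SignedMeasure ℝ) (r : ℝ) (n : ℕ) (l i : ℕ) : Prop :=
  Divided μ r n l i ∧ ¬ Divided μ r n (l + 1) (2 * i) ∧ ¬ Divided μ r n (l + 1) (2 * i + 1)

lemma binInt_succ_subset {r : ℝ} (hr : 0 ≤ r) (l i : ℕ) :
    binInt r (l+1) i ⊆ binInt r l (i/2) := by
  have h2 : (0:ℝ) < 2 ^ (l+1) := by positivity
  have hdm := Nat.div_add_mod i 2
  have h1 : ((i/2 : ℕ):ℝ) * 2 ≤ (i:ℝ) := by exact_mod_cast Nat.div_mul_le_self i 2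
  have h3 : (i:ℝ) + 1 ≤ (((i/2 : ℕ):ℝ) + 1) * 2 := by
    have : i ≤ 2 * (i/2) + 1 := by omega
    have := (Nat.cast_le (α := ℝ)).2 this
    push_cast at this
    linarith
  have hr2 : (0:ℝ) ≤ r * 2 ^ l := by positivity
  apply Set.Ioc_subset_Ioc
  · rw [div_le_div_iff₀ (by positivity) h2, pow_succ]
    nlinarith [mul_le_mul_of_nonneg_right h1 hr2]
  · rw [div_le_div_iff₀ h2 (by positivity), pow_succ]
    nlinarith [mul_le_mul_of_nonneg_right h3 hr2]

lemma binInt_anc_subset {r : ℝ} (hr : 0 ≤ r) (l k i : ℕ) :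
    binInt r (l+k) i ⊆ binInt r l (i / 2^k) := by
  induction k generalizing i with
  | zero => simp [Nat.div_one]
  | succ k ih =>
    have h1 : binInt r (l+k+1) i ⊆ binInt r (l+k) (i/2) := binInt_succ_subset hr _ _
    have h2 := ih (i := i/2)
    have : i / 2 / 2 ^ k = i / 2 ^ (k+1) := by
      rw [Nat.div_div_eq_div_mul, pow_succ, mul_comm]
    rw [this] at h2
    exact (show binInt r (l+(k+1)) i = binInt r (l+k+1) i by ring_nf).le.trans (h1.trans h2)

lemma binInt_disj {r : ℝ} (hr : 0 ≤ r) (l : ℕ) {i j : ℕ} (h : i ≠ j) :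
    Disjoint (binInt r l i) (binInt r l j) := by
  have key : ∀ i j : ℕ, i < j → Disjoint (binInt r l i) (binInt r l j) := by
    intro i j hij
    rw [binInt, binInt, Set.Ioc_disjoint_Ioc]
    have h2 : (0:ℝ) < 2 ^ l := by positivity
    have : ((i:ℝ) + 1) * r / 2 ^ l ≤ (j:ℝ) * r / 2 ^ l := by
      rw [div_le_div_iff₀ h2 h2]
      have : (i:ℝ) + 1 ≤ (j:ℝ) := by exact_mod_cast hij
      nlinarith [mul_le_mul_of_nonneg_right this (show (0:ℝ) ≤ r * 2 ^ l by positivity)]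
    exact le_trans (min_le_left _ _) (le_trans this (le_max_right _ _))
  rcases lt_or_gt_of_ne h with h' | h'
  · exact key _ _ h'
  · exact (key _ _ h').symm

section Aux

variable {r : ℝ} {n : ℕ} {μ : MeasureTheory.SignedMeasure ℝ}

lemma divided_anc {l i : ℕ} (h : Divided μ r n l i) :
    ∀ k, k ≤ l → Divided μ r n k (i / 2 ^ (l - k)) := by
  induction l generalizing i with
  | zero =>
    intro k hk
    interval_cases k
    simpa using h
  | succ l ih =>
    intro k hk
    rcases Nat.eq_or_lt_of_le hk with rfl | hk'
    · simpa using h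
    · have hk2 : k ≤ l := by omega
      have h2 := ih h.1 k hk2
      have : i / 2 / 2 ^ (l - k) = i / 2 ^ (l + 1 - k) := by
        rw [Nat.div_div_eq_div_mul]
        congr 1
        rw [show l + 1 - k = (l - k) + 1 by omega, pow_succ, mul_comm]
      rwa [this] at h2

lemma tv_ne_top (hμ1 : μ.totalVariation Set.univ ≤ 1) (s : Set ℝ) :
    μ.totalVariation s ≠ ⊤ :=
  (lt_of_le_of_lt (le_trans (measure_mono (Set.subset_univ _)) hμ1) ENNReal.one_lt_top).ne

lemma divCond_of_divided {l i : ℕ} (hl : 0 < l) (h : Divided μ r n l i) :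
    DivCond μ r n l i := by
  cases l with
  | zero => omega
  | succ l => exact h.2

lemma level_le (hn : 0 < n) (hμ1 : μ.totalVariation Set.univ ≤ 1)
    {l i : ℕ} (h : Divided μ r n l i) : l ≤ n := by
  rcases Nat.eq_zero_or_pos l with rfl | hl
  · omega
  · have hc := divCond_of_divided hl h
    have h1 : (μ.totalVariation (binInt r l i)).toReal ≤ 1 := by
      have h2 : μ.totalVariation (binInt r l i) ≤ 1 :=
        le_trans (measure_mono (Set.subset_univ _)) hμ1
      have := ENNReal.toReal_mono (show (1:ℝ≥0∞) ≠ ⊤ by norm_num) h2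
      simpa using this
    have : (l : ℝ) / n ≤ 1 := le_trans hc h1
    have hn' : (0:ℝ) < n := by exact_mod_cast hn
    rw [div_le_one hn'] at this
    exact_mod_cast this

lemma idx_lt (hn : 0 < n) (hr0 : 0 < r)
    (hsupp : μ.totalVariation (Set.Ioc (0 : ℝ) r)ᶜ = 0)
    {l i : ℕ} (h : Divided μ r n l i) : i < 2 ^ l := by
  rcases Nat.eq_zero_or_pos l with rfl | hl
  · have : i = 0 := h
    simp [this]
  · by_contra hge
    push_neg at hge
    have hc := divCond_of_divided hl h
    have hsub : binInt r l i ⊆ (Set.Ioc (0 : ℝ) r)ᶜ := by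
      intro x hx
      have h2 : (0:ℝ) < 2 ^ l := by positivity
      have hcast : (2:ℝ) ^ l ≤ (i : ℝ) := by exact_mod_cast hge
      have hrx : r < x := by
        have hle : r ≤ (i : ℝ) * r / 2 ^ l := by
          rw [le_div_iff₀ h2]
          nlinarith
        exact lt_of_le_of_lt hle hx.1
      intro hx'
      exact absurd hx'.2 (not_le.mpr hrx)
    have h0 : μ.totalVariation (binInt r l i) = 0 :=
      measure_mono_null hsub hsupp
    rw [DivCond, h0] at hc
    have hpos : (0:ℝ) < (l:ℝ) / n := by
      apply div_pos
      · exact_mod_cast hl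
      · exact_mod_cast hn
    simp at hc
    linarith

end Aux

section Aux2

variable {r : ℝ} {n : ℕ} {μ : MeasureTheory.SignedMeasure ℝ}

lemma level_le_ennreal (hn : 0 < n) (hμ1 : μ.totalVariation Set.univ ≤ 1)
    {l i : ℕ} (h : Divided μ r n l i) :
    (l : ℝ≥0∞) ≤ n * μ.totalVariation (binInt r l i) := by
  rcases Nat.eq_zero_or_pos l with rfl | hl
  · simp
  · have hc := divCond_of_divided hl h
    have hne : μ.totalVariation (binInt r l i) ≠ ⊤ := tv_ne_top hμ1 _
    have hn' : (0:ℝ) < n := by exact_mod_cast hn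
    have hreal : (l : ℝ) ≤ n * (μ.totalVariation (binInt r l i)).toReal := by
      rw [DivCond, div_le_iff₀ hn'] at hc
      linarith [hc]
    calc (l : ℝ≥0∞) = ENNReal.ofReal (l : ℝ) := by simp
      _ ≤ ENNReal.ofReal ((n:ℝ) * (μ.totalVariation (binInt r l i)).toReal) :=
          ENNReal.ofReal_le_ofReal hreal
      _ = ENNReal.ofReal (n:ℝ) * ENNReal.ofReal (μ.totalVariation (binInt r l i)).toReal := by
          rw [ENNReal.ofReal_mul (by positivity)]
      _ = n * μ.totalVariation (binInt r l i) := by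
          rw [ENNReal.ofReal_natCast, ENNReal.ofReal_toReal hne]

lemma terminal_disjoint (hr0 : 0 < r)
    {p q : ℕ × ℕ} (hp : TerminalDiv μ r n p.1 p.2) (hq : TerminalDiv μ r n q.1 q.2)
    (hpq : p ≠ q) : Disjoint (binInt r p.1 p.2) (binInt r q.1 q.2) := by
  have key : ∀ p q : ℕ × ℕ, TerminalDiv μ r n p.1 p.2 → TerminalDiv μ r n q.1 q.2 →
      p ≠ q → p.1 ≤ q.1 → Disjoint (binInt r p.1 p.2) (binInt r q.1 q.2) := by
    rintro ⟨a, b⟩ ⟨c, d⟩ hp hq hpq hle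
    simp only at *
    rcases Nat.eq_or_lt_of_le hle with rfl | hlt
    · exact binInt_disj hr0.le _ (by simpa using hpq)
    · set k := c - a with hk
      have hc : c = a + k := by omega
      have hsub : binInt r c d ⊆ binInt r a (d / 2 ^ k) := by
        rw [hc]; exact binInt_anc_subset hr0.le _ _ _
      by_cases hidx : d / 2 ^ k = b
      · exfalso
        have hk1 : 1 ≤ k := by omega
        have hanc := divided_anc hq.1 (a + 1) (by omega)
        have hrw : c - (a + 1) = k - 1 := by omega
        rw [hrw] at hanc
        have hdd : d / 2 ^ (k - 1) / 2 = b := by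
          rw [Nat.div_div_eq_div_mul, ← pow_succ, show k - 1 + 1 = k by omega, hidx]
        rcases (by omega : d / 2 ^ (k-1) = 2 * b ∨ d / 2 ^ (k-1) = 2 * b + 1) with he | he
        · exact hp.2.1 (he ▸ hanc)
        · exact hp.2.2 (he ▸ hanc)
      · exact Set.disjoint_of_subset_right hsub (binInt_disj hr0.le a (Ne.symm hidx))
  rcases le_total p.1 q.1 with h | h
  · exact key p q hp hq hpq h
  · exact (key q p hq hp (Ne.symm hpq) h).symm

lemma exists_terminal (hn : 0 < n) (hμ1 : μ.totalVariation Set.univ ≤ 1) :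
    ∀ (k l i : ℕ), n + 1 - l ≤ k → Divided μ r n l i →
      ∃ q : ℕ × ℕ, TerminalDiv μ r n q.1 q.2 ∧ l ≤ q.1 ∧ q.2 / 2 ^ (q.1 - l) = i := by
  intro k
  induction k with
  | zero =>
    intro l i hkl h
    have := level_le hn hμ1 h
    omega
  | succ k ih =>
    intro l i hkl h
    by_cases hterm : TerminalDiv μ r n l i
    · exact ⟨(l, i), hterm, le_rfl, by simp⟩
    · have hL : l ≤ n := level_le hn hμ1 h
      have hchild : Divided μ r n (l+1) (2*i) ∨ Divided μ r n (l+1) (2*i+1) := by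
        rw [TerminalDiv] at hterm
        tauto
      have step : ∀ c : ℕ, c / 2 = i → Divided μ r n (l+1) c →
          ∃ q : ℕ × ℕ, TerminalDiv μ r n q.1 q.2 ∧ l ≤ q.1 ∧ q.2 / 2 ^ (q.1 - l) = i := by
        intro c hc hdc
        obtain ⟨q, hq, hlq, hdiv⟩ := ih (l+1) c (by omega) hdc
        refine ⟨q, hq, by omega, ?_⟩
        have : q.1 - l = (q.1 - (l+1)) + 1 := by omega
        rw [this, pow_succ, ← Nat.div_div_eq_div_mul, hdiv, hc]
      rcases hchild with hd | hd
      · exact step _ (by omega) hd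
      · exact step _ (by omega) hd

end Aux2

section Aux3

variable {r : ℝ} {n : ℕ} {μ : MeasureTheory.SignedMeasure ℝ}

lemma sum_levels_le (hn : 0 < n) (hr0 : 0 < r) (hμ1 : μ.totalVariation Set.univ ≤ 1)
    (s : Finset (ℕ × ℕ)) (hs : ∀ p ∈ s, TerminalDiv μ r n p.1 p.2) :
    ∑ p ∈ s, (p.1 : ℝ≥0∞) ≤ (n : ℝ≥0∞) := by
  have hdisj : (↑s : Set (ℕ × ℕ)).PairwiseDisjoint (fun p => binInt r p.1 p.2) := by
    intro p hp q hq hpq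
    exact terminal_disjoint hr0 (hs p hp) (hs q hq) hpq
  have hmeas : ∀ p ∈ s, MeasurableSet (binInt r p.1 p.2) := fun p _ => measurableSet_Ioc
  have hsum : ∑ p ∈ s, μ.totalVariation (binInt r p.1 p.2) ≤ 1 := by
    rw [← measure_biUnion_finset hdisj hmeas]
    exact le_trans (measure_mono (Set.subset_univ _)) hμ1
  calc ∑ p ∈ s, (p.1 : ℝ≥0∞)
      ≤ ∑ p ∈ s, (n : ℝ≥0∞) * μ.totalVariation (binInt r p.1 p.2) :=
        Finset.sum_le_sum fun p hp => level_le_ennreal hn hμ1 (hs p hp).1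
    _ = (n : ℝ≥0∞) * ∑ p ∈ s, μ.totalVariation (binInt r p.1 p.2) := by
        rw [Finset.mul_sum]
    _ ≤ (n : ℝ≥0∞) * 1 := by
        gcongr
    _ = n := by simp

def ancQ (Q : Set (ℕ × ℕ)) (l i : ℕ) : Prop :=
  ∃ p ∈ Q, l ≤ p.1 ∧ p.2 / 2 ^ (p.1 - l) = i

def FQ (Q : Set (ℕ × ℕ)) : Set (ℕ × ℕ) :=
  {p | 0 < p.1 ∧ ancQ Q (p.1 - 1) (p.2 / 2) ∧ ¬ ancQ Q p.1 p.2}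

lemma divided_iff_anc (hn : 0 < n) (hμ1 : μ.totalVariation Set.univ ≤ 1) (l i : ℕ) :
    Divided μ r n l i ↔ ancQ {p : ℕ × ℕ | TerminalDiv μ r n p.1 p.2} l i := by
  constructor
  · intro h
    obtain ⟨q, hq, hlq, hdiv⟩ := exists_terminal hn hμ1 (n+1) l i (by omega) h
    exact ⟨q, hq, hlq, hdiv⟩
  · rintro ⟨q, hq, hlq, rfl⟩
    have := divided_anc hq.1 l hlq
    exact this

lemma part_eq_FQ (hn : 0 < n) (hμ1 : μ.totalVariation Set.univ ≤ 1) :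
    {p : ℕ × ℕ | InPartition μ r n p.1 p.2} =
      FQ {p : ℕ × ℕ | TerminalDiv μ r n p.1 p.2} := by
  ext ⟨l, i⟩
  cases l with
  | zero =>
    simp only [Set.mem_setOf_eq, FQ]
    constructor
    · intro h; exact absurd h (by simp [InPartition])
    · rintro ⟨h, -⟩; omega
  | succ l =>
    simp only [Set.mem_setOf_eq, FQ, InPartition]
    rw [← divided_iff_anc hn hμ1, ← divided_iff_anc hn hμ1]
    simp only [Nat.add_sub_cancel]
    constructor
    · rintro ⟨h1, h2⟩
      refine ⟨by omega, h1, fun hd => h2 hd.2⟩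
    · rintro ⟨-, h1, h2⟩
      exact ⟨h1, fun hc => h2 ⟨h1, hc⟩⟩

end Aux3

section Aux4

open Finset

def Gset (n : ℕ) : Finset (ℕ × ℕ) :=
  (Finset.range (n+1)).biUnion (fun l => {l} ×ˢ Finset.range (2^l))

lemma mem_Gset {n : ℕ} {p : ℕ × ℕ} : p ∈ Gset n ↔ p.1 ≤ n ∧ p.2 < 2 ^ p.1 := by
  rcases p with ⟨l, i⟩
  simp only [Gset, Finset.mem_biUnion, Finset.mem_range, Finset.mem_product,
    Finset.mem_singleton, Nat.lt_succ_iff]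
  constructor
  · rintro ⟨a, ha, h1, h2⟩; subst h1; exact ⟨ha, h2⟩
  · rintro ⟨h1, h2⟩; exact ⟨l, h1, rfl, h2⟩

variable {r : ℝ} {n : ℕ} {μ : MeasureTheory.SignedMeasure ℝ}

lemma divided_finite (hn : 0 < n) (hr0 : 0 < r)
    (hsupp : μ.totalVariation (Set.Ioc (0 : ℝ) r)ᶜ = 0)
    (hμ1 : μ.totalVariation Set.univ ≤ 1) :
    {p : ℕ × ℕ | Divided μ r n p.1 p.2}.Finite := by
  apply Set.Finite.subset (Gset n).finite_toSet
  intro p hp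
  simp only [Finset.coe_sort_coe, Finset.mem_coe]
  exact mem_Gset.mpr ⟨level_le hn hμ1 hp, idx_lt hn hr0 hsupp hp⟩

lemma terminal_finite (hn : 0 < n) (hr0 : 0 < r)
    (hsupp : μ.totalVariation (Set.Ioc (0 : ℝ) r)ᶜ = 0)
    (hμ1 : μ.totalVariation Set.univ ≤ 1) :
    {p : ℕ × ℕ | TerminalDiv μ r n p.1 p.2}.Finite :=
  (divided_finite hn hr0 hsupp hμ1).subset (fun p hp => hp.1)

lemma terminal_sum_nat (hn : 0 < n) (hr0 : 0 < r)
    (hμ1 : μ.totalVariation Set.univ ≤ 1)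
    (s : Finset (ℕ × ℕ)) (hs : ∀ p ∈ s, TerminalDiv μ r n p.1 p.2) :
    ∑ p ∈ s, p.1 ≤ n := by
  have h := sum_levels_le hn hr0 hμ1 s hs
  have : ((∑ p ∈ s, p.1 : ℕ) : ℝ≥0∞) ≤ ((n : ℕ) : ℝ≥0∞) := by
    push_cast
    exact h
  exact_mod_cast this

end Aux4

section Aux5

open Finset

variable {r : ℝ} {n : ℕ} {μ : MeasureTheory.SignedMeasure ℝ}

lemma part_finset (hn : 0 < n) (hr0 : 0 < r)
    (hsupp : μ.totalVariation (Set.Ioc (0 : ℝ) r)ᶜ = 0)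
    (hμ1 : μ.totalVariation Set.univ ≤ 1) :
    ∃ s : Finset (ℕ × ℕ), {p : ℕ × ℕ | InPartition μ r n p.1 p.2} = ↑s ∧
      s.card ≤ 2 * (n + 1) := by
  classical
  have hD := divided_finite hn hr0 hsupp hμ1
  have hT := terminal_finite hn hr0 hsupp hμ1
  set dD := hD.toFinset with hdDdef
  set tT := hT.toFinset with htTdef
  have hmemD : ∀ p : ℕ × ℕ, p ∈ dD ↔ Divided μ r n p.1 p.2 := fun p => hD.mem_toFinset
  have hmemT : ∀ p : ℕ × ℕ, p ∈ tT ↔ TerminalDiv μ r n p.1 p.2 := fun p => hT.mem_toFinset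
  have hsum : ∑ p ∈ tT, p.1 ≤ n :=
    terminal_sum_nat hn hr0 hμ1 tT (fun p hp => (hmemT p).mp hp)
  -- tT.card ≤ n + 1
  have htT : tT.card ≤ n + 1 := by
    have hsplit := Finset.card_filter_add_card_filter_not
      (s := tT) (p := fun p => p.1 = 0)
    have h0 : (tT.filter (fun p => p.1 = 0)).card ≤ 1 := by
      apply Finset.card_le_one.mpr
      intro a ha b hb
      simp only [Finset.mem_filter] at ha hb
      have ha2 : a.2 = 0 := by
        have := ((hmemT a).mp ha.1).1
        rcases a with ⟨al, ai⟩
        simp only at *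
        rw [ha.2] at this
        exact this
      have hb2 : b.2 = 0 := by
        have := ((hmemT b).mp hb.1).1
        rcases b with ⟨bl, bi⟩
        simp only at *
        rw [hb.2] at this
        exact this
      exact Prod.ext (ha.2.trans hb.2.symm) (ha2.trans hb2.symm)
    have h1 : (tT.filter (fun p => ¬ p.1 = 0)).card ≤ n := by
      calc (tT.filter (fun p => ¬ p.1 = 0)).card
          = ∑ p ∈ tT.filter (fun p => ¬ p.1 = 0), 1 := by
            rw [Finset.card_eq_sum_ones]
        _ ≤ ∑ p ∈ tT.filter (fun p => ¬ p.1 = 0), p.1 := by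
            apply Finset.sum_le_sum
            intro p hp
            simp only [Finset.mem_filter] at hp
            omega
        _ ≤ ∑ p ∈ tT, p.1 := Finset.sum_le_sum_of_subset (Finset.filter_subset _ _)
        _ ≤ n := hsum
    omega
  -- dD.card ≤ 2 * n + 1
  have hdesc : ∀ p : ℕ × ℕ, ∃ q : ℕ × ℕ, p ∈ dD →
      q ∈ tT ∧ p.1 ≤ q.1 ∧ q.2 / 2 ^ (q.1 - p.1) = p.2 := by
    intro p
    by_cases hp : p ∈ dD
    · obtain ⟨q, hq1, hq2, hq3⟩ :=
        exists_terminal hn hμ1 (n+1) p.1 p.2 (by omega) ((hmemD p).mp hp)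
      exact ⟨q, fun _ => ⟨(hmemT q).mpr hq1, hq2, hq3⟩⟩
    · exact ⟨(0,0), fun h => absurd h hp⟩
  choose f hf using hdesc
  have hdD : dD.card ≤ 2 * n + 1 := by
    have hinj : dD.card ≤ (tT.sigma fun q => Finset.range (q.1+1)).card := by
      apply Finset.card_le_card_of_injOn (fun p => (⟨f p, p.1⟩ : Σ _ : ℕ × ℕ, ℕ))
      · intro p hp
        obtain ⟨h1, h2, _⟩ := hf p hp
        exact Finset.mem_sigma.mpr ⟨h1, Finset.mem_range.mpr (by dsimp only; omega)⟩
      · intro p hp p' hp' heq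
        simp only [Finset.mem_coe] at hp hp'
        obtain ⟨-, -, h3⟩ := hf p hp
        obtain ⟨-, -, h3'⟩ := hf p' hp'
        have hq : f p = f p' := congrArg Sigma.fst heq
        have hl : p.1 = p'.1 := by
          have := congrArg Sigma.snd heq
          simpa using (Sigma.mk.inj_iff.mp heq).2.eq
        have : p.2 = p'.2 := by rw [← h3, ← h3', hq, hl]
        exact Prod.ext hl this
    rw [Finset.card_sigma] at hinj
    simp only [Finset.card_range] at hinj
    rw [Finset.sum_add_distrib] at hinj
    simp only [Finset.sum_const, smul_eq_mul, mul_one] at hinj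
    omega
  -- children
  set cC := (dD ×ˢ ({0,1} : Finset ℕ)).image (fun x => (x.1.1 + 1, 2 * x.1.2 + x.2))
    with hcCdef
  have hcC : cC.card ≤ dD.card * 2 := by
    apply le_trans Finset.card_image_le
    rw [Finset.card_product]
    simp
  set dD' := dD.filter (fun p => ¬ p.1 = 0) with hdD'def
  have hmemcC : ∀ l i : ℕ, Divided μ r n l (i / 2) → (l + 1, i) ∈ cC := by
    intro l i hdiv
    rw [hcCdef, Finset.mem_image]
    refine ⟨((l, i / 2), i % 2), ?_, ?_⟩
    · rw [Finset.mem_product]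
      constructor
      · exact (hmemD _).mpr hdiv
      · have : i % 2 = 0 ∨ i % 2 = 1 := by omega
        simp only [Finset.mem_insert, Finset.mem_singleton]
        tauto
    · simp only
      rw [Prod.mk.injEq]
      exact ⟨rfl, by omega⟩
  have hdd'1 : dD'.card + 1 = dD.card := by
    have hins : insert ((0:ℕ), (0:ℕ)) dD' = dD := by
      ext p
      simp only [Finset.mem_insert, hdD'def, Finset.mem_filter]
      constructor
      · rintro (rfl | ⟨hp, -⟩)
        · exact (hmemD _).mpr (show Divided μ r n 0 0 from rfl)
        · exact hp
      · intro hp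
        by_cases hp0 : p.1 = 0
        · left
          have := (hmemD p).mp hp
          rcases p with ⟨pl, pi⟩
          simp only at hp0
          subst hp0
          exact Prod.ext rfl this
        · right; exact ⟨hp, hp0⟩
    have hnm : ((0:ℕ), (0:ℕ)) ∉ dD' := by
      rw [hdD'def, Finset.mem_filter]
      rintro ⟨-, h⟩
      exact h rfl
    rw [← hins, Finset.card_insert_of_notMem hnm]
  have hsubC : dD' ⊆ cC := by
    intro p hp
    rw [hdD'def, Finset.mem_filter] at hp
    obtain ⟨hp1, hp2⟩ := hp
    rcases p with ⟨l, i⟩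
    simp only at hp2
    cases l with
    | zero => omega
    | succ l =>
      have hdiv := (hmemD _).mp hp1
      exact hmemcC l i hdiv.1
  -- partition set
  have hPsub : {p : ℕ × ℕ | InPartition μ r n p.1 p.2} ⊆ ↑(cC \ dD') := by
    rintro ⟨l, i⟩ hp
    simp only [Set.mem_setOf_eq] at hp
    cases l with
    | zero => exact absurd hp (by simp [InPartition])
    | succ l =>
      obtain ⟨hdiv, hnc⟩ := hp
      rw [Finset.coe_sdiff]
      refine ⟨hmemcC l i hdiv, ?_⟩
      simp only [Finset.mem_coe, hdD'def, Finset.mem_filter]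
      rintro ⟨hmem, -⟩
      exact hnc ((hmemD _).mp hmem).2
  have hPfin : {p : ℕ × ℕ | InPartition μ r n p.1 p.2}.Finite :=
    Set.Finite.subset (cC \ dD').finite_toSet hPsub
  refine ⟨hPfin.toFinset, (hPfin.coe_toFinset).symm, ?_⟩
  have hsubP : hPfin.toFinset ⊆ cC \ dD' := by
    rw [Set.Finite.toFinset_subset]
    exact hPsub
  have h1 : hPfin.toFinset.card ≤ (cC \ dD').card := Finset.card_le_card hsubP
  rw [Finset.card_sdiff_of_subset hsubC] at h1
  omega

end Aux5

section Aux6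

open Finset

def validSet (n : ℕ) : Finset (Finset (ℕ × ℕ)) :=
  (Gset n).powerset.filter (fun s => ∑ p ∈ s, p.1 ≤ n)

lemma prod_Gset (n : ℕ) :
    ∏ p ∈ Gset n, (1 + (2⁻¹ : ℝ) ^ p.1) =
      ∏ l ∈ Finset.range (n+1), (1 + (2⁻¹ : ℝ) ^ l) ^ (2 ^ l) := by
  rw [Gset, Finset.prod_biUnion]
  · apply Finset.prod_congr rfl
    intro l _
    rw [Finset.prod_product]
    simp [Finset.prod_const]
  · intro a _ b _ hab
    simp only [Function.onFun, Finset.disjoint_left]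
    intro p hp hq
    rw [Finset.mem_product, Finset.mem_singleton] at hp hq
    exact hab (hp.1.symm.trans hq.1)

lemma validSet_card_le (n : ℕ) (hn : 0 < n) :
    ((validSet n).card : ℝ) ≤ (4 * Real.exp 1) ^ n := by
  have hmain : ((validSet n).card : ℝ) ≤
      2 ^ n * ∏ p ∈ Gset n, (1 + (2⁻¹ : ℝ) ^ p.1) := by
    have hsum : ∏ p ∈ Gset n, ((2⁻¹ : ℝ) ^ p.1 + 1) =
        ∑ t ∈ (Gset n).powerset, ∏ p ∈ t, (2⁻¹ : ℝ) ^ p.1 := by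
      rw [Finset.prod_add]
      apply Finset.sum_congr rfl
      intro t _
      simp
    calc ((validSet n).card : ℝ)
        = ∑ s ∈ validSet n, (1:ℝ) := by rw [Finset.sum_const]; simp
      _ ≤ ∑ s ∈ validSet n, 2 ^ n * ∏ p ∈ s, (2⁻¹ : ℝ) ^ p.1 := by
          apply Finset.sum_le_sum
          intro s hs
          rw [validSet, Finset.mem_filter] at hs
          have h1 : ∏ p ∈ s, (2⁻¹ : ℝ) ^ p.1 = (2⁻¹ : ℝ) ^ (∑ p ∈ s, p.1) :=
            Finset.prod_pow_eq_pow_sum _ _ _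
          have h2 : ((2⁻¹ : ℝ)) ^ n ≤ (2⁻¹ : ℝ) ^ (∑ p ∈ s, p.1) :=
            pow_le_pow_of_le_one (by norm_num) (by norm_num) hs.2
          rw [h1]
          calc (1:ℝ) = 2 ^ n * (2⁻¹) ^ n := by
                rw [← mul_pow]; norm_num
            _ ≤ 2 ^ n * (2⁻¹ : ℝ) ^ (∑ p ∈ s, p.1) := by
                apply mul_le_mul_of_nonneg_left h2 (by positivity)
      _ ≤ ∑ s ∈ (Gset n).powerset, 2 ^ n * ∏ p ∈ s, (2⁻¹ : ℝ) ^ p.1 := by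
          apply Finset.sum_le_sum_of_subset_of_nonneg (Finset.filter_subset _ _)
          intro s _ _
          positivity
      _ = 2 ^ n * ∑ s ∈ (Gset n).powerset, ∏ p ∈ s, (2⁻¹ : ℝ) ^ p.1 := by
          rw [Finset.mul_sum]
      _ = 2 ^ n * ∏ p ∈ Gset n, ((2⁻¹ : ℝ) ^ p.1 + 1) := by rw [hsum]
      _ = 2 ^ n * ∏ p ∈ Gset n, (1 + (2⁻¹ : ℝ) ^ p.1) := by
          congr 1
          exact Finset.prod_congr rfl (fun p _ => by ring)
  have hprod : ∏ p ∈ Gset n, (1 + (2⁻¹ : ℝ) ^ p.1) ≤ Real.exp 1 ^ n * 2 := by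
    rw [prod_Gset]
    rw [Finset.prod_range_succ']
    have hf0 : (1 + (2⁻¹ : ℝ) ^ 0) ^ (2 ^ 0) = 2 := by norm_num
    rw [hf0]
    have hfac : ∀ l : ℕ, (1 + (2⁻¹ : ℝ) ^ (l+1)) ^ (2 ^ (l+1)) ≤ Real.exp 1 := by
      intro l
      have h1 : (1 + (2⁻¹ : ℝ) ^ (l+1)) ≤ Real.exp ((2⁻¹ : ℝ) ^ (l+1)) := by
        have := Real.add_one_le_exp ((2⁻¹ : ℝ) ^ (l+1))
        linarith
      have h2 : (1 + (2⁻¹ : ℝ) ^ (l+1)) ^ (2 ^ (l+1)) ≤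
          (Real.exp ((2⁻¹ : ℝ) ^ (l+1))) ^ (2 ^ (l+1)) :=
        pow_le_pow_left₀ (by positivity) h1 _
      have h3 : (Real.exp ((2⁻¹ : ℝ) ^ (l+1))) ^ (2 ^ (l+1) : ℕ) = Real.exp 1 := by
        rw [← Real.exp_nat_mul]
        congr 1
        push_cast
        rw [← mul_pow]
        norm_num
      rw [h3] at h2
      exact h2
    have h4 : ∏ l ∈ Finset.range n, (1 + (2⁻¹ : ℝ) ^ (l+1)) ^ (2 ^ (l+1)) ≤
        ∏ l ∈ Finset.range n, Real.exp 1 := by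
      apply Finset.prod_le_prod
      · intro l _; positivity
      · intro l _; exact hfac l
    rw [Finset.prod_const, Finset.card_range] at h4
    exact mul_le_mul_of_nonneg_right h4 (by norm_num)
  have h2n : (2:ℝ) ≤ 2 ^ n := by
    calc (2:ℝ) = 2 ^ 1 := by norm_num
    _ ≤ 2 ^ n := pow_le_pow_right₀ (by norm_num) hn
  have hexp : (0:ℝ) < Real.exp 1 ^ n := by positivity
  calc ((validSet n).card : ℝ)
      ≤ 2 ^ n * (Real.exp 1 ^ n * 2) :=
        le_trans hmain (mul_le_mul_of_nonneg_left hprod (by positivity))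
    _ ≤ 4 ^ n * Real.exp 1 ^ n := by
        have : (4:ℝ) ^ n = 2 ^ n * 2 ^ n := by
          rw [← mul_pow]; norm_num
        rw [this]
        nlinarith [mul_le_mul_of_nonneg_right h2n
          (le_of_lt (mul_pos (pow_pos (show (0:ℝ) < 2 by norm_num) n) hexp))]
    _ = (4 * Real.exp 1) ^ n := by rw [mul_pow]

end Aux6


/-- Size and counting properties of `n`-essential partitions: for `r < e^{-2}`,
`n ≥ 1` and a signed measure `μ` supported on `(0,r]` with `‖μ‖₁ ≤ 1`:
(i) the partition `𝕀ⁿ_μ` has at most `2(n+1)` intervals;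
(ii) the terminal divided intervals `Q` satisfy `Σ_{l ≥ 0} l·q_l ≤ n`
(where `q_l` counts the elements of `Q` of level `l`), and consequently the number
of possible `n`-essential partitions over all admissible `μ` is at most `(4e)ⁿ`. -/
theorem essential_partition_size_and_count (r : ℝ) (hr0 : 0 < r) (hr : r < Real.exp (-2))
    (n : ℕ) (hn : 0 < n) (μ : MeasureTheory.SignedMeasure ℝ)
    (hsupp : μ.totalVariation (Set.Ioc (0 : ℝ) r)ᶜ = 0)
    (hμ1 : μ.totalVariation Set.univ ≤ 1) :
    {p : ℕ × ℕ | InPartition μ r n p.1 p.2}.encard ≤ 2 * ((n : ℝ≥0∞) + 1) ∧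
      (∑' p : {p : ℕ × ℕ // TerminalDiv μ r n p.1 p.2}, (p.1.1 : ℝ≥0∞)) ≤ (n : ℝ≥0∞) ∧
      {P : Set (ℕ × ℕ) | ∃ ν : MeasureTheory.SignedMeasure ℝ,
          ν.totalVariation (Set.Ioc (0 : ℝ) r)ᶜ = 0 ∧
          ν.totalVariation Set.univ ≤ 1 ∧
          P = {p : ℕ × ℕ | InPartition ν r n p.1 p.2}}.encard ≤
        ENNReal.ofReal ((4 * Real.exp 1) ^ n) := by
  classical
  refine ⟨?_, ?_, ?_⟩
  · obtain ⟨s, hs, hcard⟩ := part_finset hn hr0 hsupp hμ1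
    rw [hs, Set.encard_coe_eq_coe_finsetCard]
    have : (s.card : ℝ≥0∞) ≤ ((2 * (n + 1) : ℕ) : ℝ≥0∞) := by exact_mod_cast hcard
    refine le_trans this (le_of_eq ?_)
    push_cast
    ring
  · rw [ENNReal.tsum_eq_iSup_sum]
    apply iSup_le
    intro F
    have : ∑ x ∈ F, ((x : {p : ℕ × ℕ // TerminalDiv μ r n p.1 p.2}).1.1 : ℝ≥0∞) =
        ∑ p ∈ F.image (fun x => x.1), (p.1 : ℝ≥0∞) := by
      rw [Finset.sum_image]
      intro x _ y _ hxy
      exact Subtype.ext hxy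
    rw [this]
    apply sum_levels_le hn hr0 hμ1
    intro p hp
    obtain ⟨x, -, rfl⟩ := Finset.mem_image.mp hp
    exact x.2
  · have hsub : {P : Set (ℕ × ℕ) | ∃ ν : MeasureTheory.SignedMeasure ℝ,
          ν.totalVariation (Set.Ioc (0 : ℝ) r)ᶜ = 0 ∧
          ν.totalVariation Set.univ ≤ 1 ∧
          P = {p : ℕ × ℕ | InPartition ν r n p.1 p.2}} ⊆
        (fun s : Finset (ℕ × ℕ) => FQ (↑s : Set (ℕ × ℕ))) '' ↑(validSet n) := by
      rintro P ⟨ν, hν1, hν2, rfl⟩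
      have hTfin := terminal_finite hn hr0 hν1 hν2
      refine ⟨hTfin.toFinset, ?_, ?_⟩
      · simp only [Finset.mem_coe, validSet, Finset.mem_filter, Finset.mem_powerset]
        constructor
        · intro p hp
          have hterm := hTfin.mem_toFinset.mp hp
          exact mem_Gset.mpr ⟨level_le hn hν2 hterm.1, idx_lt hn hr0 hν1 hterm.1⟩
        · exact terminal_sum_nat hn hr0 hν2 _ (fun p hp => hTfin.mem_toFinset.mp hp)
      · show FQ (↑hTfin.toFinset : Set (ℕ × ℕ)) = _
        rw [hTfin.coe_toFinset]
        exact (part_eq_FQ hn hν2).symm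
    have hA : {P : Set (ℕ × ℕ) | ∃ ν : MeasureTheory.SignedMeasure ℝ,
          ν.totalVariation (Set.Ioc (0 : ℝ) r)ᶜ = 0 ∧
          ν.totalVariation Set.univ ≤ 1 ∧
          P = {p : ℕ × ℕ | InPartition ν r n p.1 p.2}}.encard ≤ ((validSet n).card : ℕ∞) := by
      refine le_trans (Set.encard_mono hsub) (le_trans (Set.encard_image_le _ _) ?_)
      rw [Set.encard_coe_eq_coe_finsetCard]
    calc ({P : Set (ℕ × ℕ) | ∃ ν : MeasureTheory.SignedMeasure ℝ,
          ν.totalVariation (Set.Ioc (0 : ℝ) r)ᶜ = 0 ∧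
          ν.totalVariation Set.univ ≤ 1 ∧
          P = {p : ℕ × ℕ | InPartition ν r n p.1 p.2}}.encard : ℝ≥0∞)
        ≤ ((validSet n).card : ℝ≥0∞) := by exact_mod_cast hA
      _ ≤ ENNReal.ofReal ((4 * Real.exp 1) ^ n) := by
          rw [← ENNReal.ofReal_natCast]
          exact ENNReal.ofReal_le_ofReal (validSet_card_le n hn)
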